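/- arXiv:math/0212158 — 9 statements merged into one kernel-verified Lean document; each statement's English description precedes it below -/
import Mathlib

section
/- Let A be a commutative ring. Every globally rational formal power series f ∈ A[[t]] is determinantally rational. -/
/-- A formal power series `f ∈ A[[t]]` is *globally rational* if there exist polynomials
`g, h ∈ A[t]` such that `f` is the unique solution in `A[[t]]` of `g·x = h`. -/
def GloballyRational {A : Type*} [CommRing A] (f : PowerSeries A) : Prop :=
  ∃ g h : Polynomial A,
    (g : PowerSeries A) * f = (h : PowerSeries A) ∧
    ∀ x : PowerSeries A, (g : PowerSeries A) * x = (h : PowerSeries A) → x = f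

/-- A formal power series `f = Σ aᵢ tⁱ ∈ A[[t]]` is *determinantally rational* if there exist
`m n : ℕ` such that for all `i > n` the `(m+1)×(m+1)` Hankel determinant
`det (a_{i+j+k})_{0 ≤ j,k ≤ m}` vanishes. -/
def DeterminantallyRational {A : Type*} [CommRing A] (f : PowerSeries A) : Prop :=
  ∃ m n : ℕ, ∀ i > n,
    Matrix.det (Matrix.of fun j k : Fin (m + 1) =>
      PowerSeries.coeff (i + j.1 + k.1) f) = 0

/-- Every globally rational power series is determinantally rational. -/
theorem globallyRational_implies_determinantallyRational
    {A : Type*} [CommRing A] (f : PowerSeries A)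
    (hf : GloballyRational f) : DeterminantallyRational f := by
  obtain ⟨g, h, hgf, huniq⟩ := hf
  refine ⟨g.natDegree, h.natDegree, fun i hi => ?_⟩
  set m := g.natDegree with hm
  set M : Matrix (Fin (m + 1)) (Fin (m + 1)) A :=
    Matrix.of (fun j k : Fin (m + 1) => PowerSeries.coeff (i + j.1 + k.1) f) with hMdef
  set w : Fin (m + 1) → A := fun k => g.coeff (m - k.1) with hwdef
  -- the key recurrence: M.mulVec w = 0
  have key : ∀ N : ℕ, m ≤ N →
      (∑ p ∈ Finset.range (m + 1), PowerSeries.coeff (N - m + p) f * g.coeff (m - p))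
        = PowerSeries.coeff N ((g : PowerSeries A) * f) := by
    intro N hN
    rw [PowerSeries.coeff_mul, Finset.Nat.sum_antidiagonal_eq_sum_range_succ_mk]
    simp only [Polynomial.coeff_coe]
    have h1 : ∑ p ∈ Finset.range (N + 1), g.coeff p * (PowerSeries.coeff (N - p)) f
        = ∑ p ∈ Finset.range (m + 1), g.coeff p * (PowerSeries.coeff (N - p)) f := by
      refine (Finset.sum_subset (Finset.range_subset_range.2 (by omega)) ?_).symm
      intro x hx hx'
      simp only [Finset.mem_range] at hx hx'
      rw [Polynomial.coeff_eq_zero_of_natDegree_lt (by omega), zero_mul]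
    rw [h1, ← Finset.sum_range_reflect]
    refine Finset.sum_congr rfl fun p hp => ?_
    simp only [Finset.mem_range] at hp
    have e0 : m + 1 - 1 - p = m - p := by omega
    rw [e0]
    have e1 : N - m + (m - p) = N - p := by omega
    have e2 : m - (m - p) = p := by omega
    rw [e1, e2, mul_comm]
  have hMw : M.mulVec w = 0 := by
    funext j
    have hcoeff : PowerSeries.coeff (i + j.1 + m) ((g : PowerSeries A) * f) = 0 := by
      rw [hgf, Polynomial.coeff_coe]
      exact Polynomial.coeff_eq_zero_of_natDegree_lt
        (lt_of_lt_of_le hi (le_trans (Nat.le_add_right i j.1) (Nat.le_add_right _ m)))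
    have hk := key (i + j.1 + m) (Nat.le_add_left m _)
    rw [hcoeff, Nat.add_sub_cancel] at hk
    simp only [Matrix.mulVec, dotProduct, hMdef, Matrix.of_apply, hwdef, Pi.zero_apply]
    rw [Fin.sum_univ_eq_sum_range
      (fun p => PowerSeries.coeff (i + j.1 + p) f * g.coeff (m - p)) (m + 1)]
    exact hk
  -- det M annihilates w
  have hdet : M.det • w = 0 := by
    have := congrArg (fun v => (Matrix.adjugate M).mulVec v) hMw
    simpa [Matrix.mulVec_mulVec, Matrix.adjugate_mul, Matrix.smul_mulVec,
      Matrix.one_mulVec, Matrix.mulVec_zero] using this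
  have hann : ∀ l : ℕ, M.det * g.coeff l = 0 := by
    intro l
    by_cases hl : l ≤ m
    · have := congrFun hdet ⟨m - l, by omega⟩
      simpa [hwdef, Nat.sub_sub_self hl] using this
    · rw [Polynomial.coeff_eq_zero_of_natDegree_lt (by omega), mul_zero]
  -- hence C(det M) * g = 0 as power series
  have hCg : (PowerSeries.C M.det) * (g : PowerSeries A) = 0 := by
    ext N
    simp [PowerSeries.coeff_C_mul, Polynomial.coeff_coe, hann N]
  have : (g : PowerSeries A) * (f + PowerSeries.C M.det) = (h : PowerSeries A) := by
    rw [mul_add, hgf, mul_comm (g : PowerSeries A), hCg, add_zero]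
  have h2 := huniq _ this
  have h3 : (PowerSeries.C M.det : PowerSeries A) = 0 := by
    have := congrArg (fun x => x - f) h2
    simpa [add_sub_cancel_left] using this
  have := congrArg (PowerSeries.constantCoeff) h3
  simpa using this
end

section
/- Let A be a commutative ring. Every determinantally rational formal power series f ∈ A[[t]] is pointwise rational. -/
/-- A formal power series `f ∈ A[[t]]` is *pointwise rational* if for every field `K` and every
ring homomorphism `φ : A → K` the image series `Σ φ(aᵢ) tⁱ` is rational over `K`. -/
def PointwiseRational {A : Type*} [CommRing A] (f : PowerSeries A) : Prop :=
  ∀ (K : Type*) [Field K], ∀ φ : A →+* K,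
    ∃ g h : Polynomial K, g ≠ 0 ∧
      (g : PowerSeries K) * PowerSeries.map φ f = (h : PowerSeries K)

open Finset Matrix

namespace DetRatAux

variable {K : Type*} [Field K]

/-- Hankel matrix of a sequence. -/
def hk (b : ℕ → K) (p i : ℕ) : Matrix (Fin p) (Fin p) K :=
  Matrix.of fun j k : Fin p => b (i + j.1 + k.1)

lemma sum_eq_vecMul (b : ℕ → K) (p i : ℕ) (y : ℕ → K) (k : Fin p) :
    ∑ s ∈ range p, y s * b (i + s + k.1)
      = ((fun j : Fin p => y j.1) ᵥ* hk b p i) k := by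
  rw [← Fin.sum_univ_eq_sum_range (fun s => y s * b (i + s + k.1)) p]
  simp [Matrix.vecMul, dotProduct, hk]

/-- From a vanishing Hankel determinant, extract a left null vector (as a `ℕ`-indexed
sequence supported on `range p`). -/
lemma NZ {b : ℕ → K} {p i : ℕ} (h : (hk b p i).det = 0) :
    ∃ y : ℕ → K, (∃ s < p, y s ≠ 0) ∧ (∀ s, p ≤ s → y s = 0) ∧
      ∀ k < p, ∑ s ∈ range p, y s * b (i + s + k) = 0 := by
  obtain ⟨v, hv, hv0⟩ := (Matrix.exists_vecMul_eq_zero_iff).2 h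
  refine ⟨fun s => if hs : s < p then v ⟨s, hs⟩ else 0, ?_, ?_, ?_⟩
  · obtain ⟨j, hj⟩ := Function.ne_iff.1 hv
    exact ⟨j.1, j.2, by simpa [j.2] using hj⟩
  · intro s hs; simp [Nat.not_lt.2 hs]
  · intro k hkp
    have hy : (fun j : Fin p => (fun s => if hs : s < p then v ⟨s, hs⟩ else 0) j.1) = v := by
      funext j; simp [j.2]
    have h2 := sum_eq_vecMul b p i (fun s => if hs : s < p then v ⟨s, hs⟩ else 0) ⟨k, hkp⟩
    rw [h2, hy, hv0, Pi.zero_apply]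

/-- A nonsingular Hankel matrix admits no nontrivial left relation. -/
lemma Zl {b : ℕ → K} {p i : ℕ} (h : (hk b p i).det ≠ 0) (y : ℕ → K)
    (hy : ∀ k < p, ∑ s ∈ range p, y s * b (i + s + k) = 0) :
    ∀ s < p, y s = 0 := by
  by_contra hcon
  push_neg at hcon
  obtain ⟨s, hs, hs0⟩ := hcon
  apply h
  apply (Matrix.exists_vecMul_eq_zero_iff).1
  refine ⟨fun j : Fin p => y j.1, ?_, ?_⟩
  · intro h0
    exact hs0 (congrFun h0 ⟨s, hs⟩)
  · funext k
    rw [← sum_eq_vecMul]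
    exact hy k.1 k.2

/-- Solve the Hankel linear system. -/
lemma Solve {b : ℕ → K} {p i : ℕ} (h : (hk b p i).det ≠ 0) :
    ∃ c : ℕ → K, ∀ k < p, ∑ s ∈ range p, c s * b (i + s + k) = b (i + p + k) := by
  have hu : IsUnit (hk b p i).det := isUnit_iff_ne_zero.2 h
  set M := hk b p i
  set v : Fin p → K := fun k => b (i + p + k.1)
  set cf : Fin p → K := M⁻¹ *ᵥ v with hcf
  refine ⟨fun s => if hs : s < p then cf ⟨s, hs⟩ else 0, ?_⟩
  intro k hkp
  have hMv : M *ᵥ cf = v := by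
    rw [hcf, Matrix.mulVec_mulVec, Matrix.mul_nonsing_inv _ hu, Matrix.one_mulVec]
  have := congrFun hMv ⟨k, hkp⟩
  rw [show v ⟨k, hkp⟩ = b (i + p + k) from rfl] at this
  rw [← this]
  rw [← Fin.sum_univ_eq_sum_range (fun s => (if hs : s < p then cf ⟨s, hs⟩ else 0) * b (i + s + k)) p]
  simp only [Matrix.mulVec, dotProduct]
  apply Finset.sum_congr rfl
  intro j _
  simp [M, hk, mul_comm, Nat.add_right_comm i k j.1]

/-- Shift a window-`p+1` relation with vanishing leading coefficient to a window-`p`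
relation at `j+1`. -/
lemma shift_rel {b : ℕ → K} {p j : ℕ} (v : ℕ → K) (hv0 : v 0 = 0)
    (hrel : ∀ k < p, ∑ s ∈ range (p + 1), v s * b (j + s + k) = 0) :
    ∀ k < p, ∑ s ∈ range p, v (s + 1) * b ((j + 1) + s + k) = 0 := by
  intro k hkp
  have h1 := hrel k hkp
  rw [Finset.sum_range_succ'] at h1
  have h2 : ∀ s, j + (s + 1) + k = (j + 1) + s + k := by intro s; omega
  simp only [h2, hv0, zero_mul, add_zero] at h1
  exact h1

/-- Extension step: a solution of the first `p` Hankel equations also satisfies the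
`p`-th one, provided the `(p+1)`-Hankel determinant vanishes and the `p`-Hankel
determinant doesn't. -/
lemma Step {b : ℕ → K} {p i : ℕ} (hH : (hk b (p + 1) i).det = 0)
    (hd : (hk b p i).det ≠ 0) (c : ℕ → K)
    (hc : ∀ k < p, ∑ s ∈ range p, c s * b (i + s + k) = b (i + p + k)) :
    ∀ k < p + 1, ∑ s ∈ range p, c s * b (i + s + k) = b (i + p + k) := by
  obtain ⟨x, ⟨sx, hsx, hsx0⟩, xsupp, xrel⟩ := NZ hH
  -- x p ≠ 0
  have hxp : x p ≠ 0 := by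
    intro hxp0
    have hz : ∀ s < p, x s = 0 := by
      apply Zl hd
      intro k hkp
      have := xrel k (by omega)
      rw [Finset.sum_range_succ, hxp0, zero_mul, add_zero] at this
      exact this
    rcases Nat.lt_or_ge sx p with h' | h'
    · exact hsx0 (hz sx h')
    · have : sx = p := by omega
      exact hsx0 (this ▸ hxp0)
  intro k hkp
  rcases Nat.lt_or_ge k p with hkl | hkg
  · exact hc k hkl
  have hkeq : k = p := by omega
  rw [hkeq]
  -- compute the weighted sum of residuals
  have T0 : ∑ k ∈ range (p + 1),
      x k * ((∑ s ∈ range p, c s * b (i + s + k)) - b (i + p + k)) = 0 := by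
    have hswap : ∑ k ∈ range (p + 1), x k * (∑ s ∈ range p, c s * b (i + s + k))
        = ∑ s ∈ range p, c s * (∑ k ∈ range (p + 1), x k * b (i + k + s)) := by
      simp only [Finset.mul_sum]
      rw [Finset.sum_comm]
      apply Finset.sum_congr rfl; intro s _
      apply Finset.sum_congr rfl; intro k _
      have e : i + s + k = i + k + s := by omega
      rw [e]; ring
    have hx1 : ∀ s < p + 1, ∑ k ∈ range (p + 1), x k * b (i + k + s) = 0 := by
      intro s hs; exact xrel s hs
    simp only [mul_sub]
    rw [Finset.sum_sub_distrib, hswap]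
    have e1 : ∑ s ∈ range p, c s * (∑ k ∈ range (p + 1), x k * b (i + k + s)) = 0 := by
      apply Finset.sum_eq_zero; intro s hs
      rw [hx1 s (by have := Finset.mem_range.1 hs; omega), mul_zero]
    have e2 : ∑ k ∈ range (p + 1), x k * b (i + p + k) = 0 := by
      have := xrel p (by omega)
      rw [← this]
      apply Finset.sum_congr rfl; intro k _
      have : i + p + k = i + k + p := by omega
      rw [this]
    rw [e1, e2, sub_zero]
  rw [Finset.sum_range_succ] at T0
  have hz : ∑ k ∈ range p,
      x k * ((∑ s ∈ range p, c s * b (i + s + k)) - b (i + p + k)) = 0 := by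
    apply Finset.sum_eq_zero; intro k hkm
    rw [hc k (Finset.mem_range.1 hkm), sub_self, mul_zero]
  rw [hz, zero_add] at T0
  rcases mul_eq_zero.1 T0 with h' | h'
  · exact absurd h' hxp
  · exact sub_eq_zero.1 h'

/-- Propagation of Hankel degeneracy: consecutive-vanishing lemma. -/
lemma prop_step {b : ℕ → K} {p j : ℕ} (hp : 0 < p)
    (hH : (hk b (p + 1) j).det = 0) (hq : (hk b p j).det = 0) :
    (hk b p (j + 1)).det = 0 := by
  by_contra hd
  obtain ⟨y, ⟨sy, hsy, hsy0⟩, ysupp, yrel⟩ := NZ hq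
  obtain ⟨x, ⟨sx, hsx, hsx0⟩, xsupp, xrel⟩ := NZ hH
  -- extended y relation on window p+1
  have yrel' : ∀ k < p, ∑ s ∈ range (p + 1), y s * b (j + s + k) = 0 := by
    intro k hkp
    rw [Finset.sum_range_succ, ysupp p le_rfl, zero_mul, add_zero]
    exact yrel k hkp
  -- y 0 ≠ 0
  have hy0 : y 0 ≠ 0 := by
    intro h0
    have := shift_rel y h0 yrel'
    have hz := Zl hd _ this
    have : ∀ s < p, y s = 0 := by
      intro s hs
      rcases Nat.eq_zero_or_pos s with rfl | hs'
      · exact h0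
      · have := hz (s - 1) (by omega)
        have e : s - 1 + 1 = s := by omega
        rwa [e] at this
    exact hsy0 (this sy hsy)
  -- x 0 ≠ 0
  have hx0 : x 0 ≠ 0 := by
    intro h0
    have hrel : ∀ k < p, ∑ s ∈ range (p + 1), x s * b (j + s + k) = 0 :=
      fun k hkp => xrel k (by omega)
    have := shift_rel x h0 hrel
    have hz := Zl hd _ this
    have hall : ∀ s < p + 1, x s = 0 := by
      intro s hs
      rcases Nat.eq_zero_or_pos s with rfl | hs'
      · exact h0
      · have := hz (s - 1) (by omega)
        have e : s - 1 + 1 = s := by omega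
        rwa [e] at this
    exact hsx0 (hall sx hsx)
  -- u := y 0 • x - x 0 • y vanishes on [1, p]
  set u : ℕ → K := fun s => y 0 * x s - x 0 * y s with hu
  have hu0 : u 0 = 0 := by simp [hu, mul_comm]
  have urel : ∀ k < p, ∑ s ∈ range (p + 1), u s * b (j + s + k) = 0 := by
    intro k hkp
    have : ∑ s ∈ range (p + 1), u s * b (j + s + k)
        = y 0 * (∑ s ∈ range (p + 1), x s * b (j + s + k))
          - x 0 * (∑ s ∈ range (p + 1), y s * b (j + s + k)) := by
      rw [Finset.mul_sum, Finset.mul_sum, ← Finset.sum_sub_distrib]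
      apply Finset.sum_congr rfl; intro s _
      simp [hu]; ring
    rw [this, xrel k (by omega), yrel' k hkp, mul_zero, mul_zero, sub_zero]
  have hzu := Zl hd _ (shift_rel u hu0 urel)
  -- x p = 0
  have hxp : x p = 0 := by
    have := hzu (p - 1) (by omega)
    have e : p - 1 + 1 = p := by omega
    rw [e] at this
    have h2 : y 0 * x p = x 0 * y p := sub_eq_zero.1 this
    rw [ysupp p le_rfl, mul_zero] at h2
    exact (mul_eq_zero.1 h2).resolve_left hy0
  -- shifted x relation kills x entirely
  have xshift : ∀ k < p, ∑ s ∈ range p, x s * b ((j + 1) + s + k) = 0 := by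
    intro k hkp
    have := xrel (k + 1) (by omega)
    rw [Finset.sum_range_succ, hxp, zero_mul, add_zero] at this
    rw [← this]
    apply Finset.sum_congr rfl; intro s _
    have e : (j + 1) + s + k = j + s + (k + 1) := by omega
    rw [e]
  have := Zl hd _ xshift 0 hp
  exact hx0 this

/-- Kronecker's lemma: vanishing of all large Hankel determinants of a fixed size
yields an eventual linear recurrence with constant coefficients. -/
lemma key (b : ℕ → K) : ∀ m n : ℕ, (∀ i > n, (hk b (m + 1) i).det = 0) →
    ∃ r N : ℕ, ∃ c : ℕ → K, ∀ s > N, b (s + r) = ∑ j ∈ range r, c j * b (s + j) := by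
  intro m
  induction m with
  | zero =>
    intro n h
    refine ⟨0, n, 0, fun s hs => ?_⟩
    have := h s hs
    rw [Matrix.det_fin_one] at this
    simpa [hk] using this
  | succ m IH =>
    intro n h
    by_cases hc : ∃ j, n < j ∧ (hk b (m + 1) j).det = 0
    · obtain ⟨j, hj, hdj⟩ := hc
      have hall : ∀ k, (hk b (m + 1) (j + k)).det = 0 := by
        intro k
        induction k with
        | zero => simpa using hdj
        | succ k ih => exact prop_step (Nat.succ_pos m) (h (j + k) (by omega)) ih
      apply IH j
      intro i hi
      have := hall (i - j)
      rwa [Nat.add_sub_cancel' (le_of_lt hi)] at this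
    · push_neg at hc
      have hd : ∀ i > n, (hk b (m + 1) i).det ≠ 0 := fun i hi => hc i hi
      obtain ⟨c, hc0⟩ := Solve (hd (n + 1) (by omega))
      set p := m + 1 with hp
      have main : ∀ k : ℕ, ∀ k' < p + 1,
          ∑ s ∈ range p, c s * b ((n + 1 + k) + s + k') = b ((n + 1 + k) + p + k') := by
        intro k
        induction k with
        | zero =>
          simpa using Step (h (n + 1) (by omega)) (hd (n + 1) (by omega)) c hc0
        | succ k ih =>
          have base : ∀ k' < p, ∑ s ∈ range p, c s * b ((n + 1 + (k + 1)) + s + k')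
              = b ((n + 1 + (k + 1)) + p + k') := by
            intro k' hk'
            have h1 := ih (k' + 1) (by omega)
            have e1 : ∀ s, (n + 1 + k) + s + (k' + 1) = (n + 1 + (k + 1)) + s + k' := by
              intro s; omega
            have e2 : (n + 1 + k) + p + (k' + 1) = (n + 1 + (k + 1)) + p + k' := by omega
            simp only [e1, e2] at h1
            exact h1
          exact Step (h (n + 1 + (k + 1)) (by omega)) (hd (n + 1 + (k + 1)) (by omega)) c base
      refine ⟨p, n, c, fun s hs => ?_⟩
      have h1 := main (s - (n + 1)) 0 (by omega)
      have e : n + 1 + (s - (n + 1)) = s := by omega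
      rw [e] at h1
      simpa using h1.symm

/-- An eventual linear recurrence yields rationality. -/
lemma rational_of_recurrence (b : ℕ → K) (r N : ℕ) (c : ℕ → K)
    (hrec : ∀ s > N, b (s + r) = ∑ j ∈ range r, c j * b (s + j)) (F : PowerSeries K)
    (hF : ∀ i, PowerSeries.coeff i F = b i) :
    ∃ g h : Polynomial K, g ≠ 0 ∧ (g : PowerSeries K) * F = (h : PowerSeries K) := by
  classical
  set g : Polynomial K :=
    1 - ∑ j ∈ range r, Polynomial.C (c j) * Polynomial.X ^ (r - j) with hg
  have hg0 : g ≠ 0 := by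
    intro h0
    have : g.coeff 0 = 1 := by
      rw [hg]
      rw [Polynomial.coeff_sub, Polynomial.coeff_one]
      rw [Polynomial.finset_sum_coeff]
      have : ∀ j ∈ range r, (Polynomial.C (c j) * Polynomial.X ^ (r - j)).coeff 0 = 0 := by
        intro j hj
        rw [Polynomial.coeff_C_mul, Polynomial.coeff_X_pow,
          if_neg (by have := Finset.mem_range.1 hj; omega), mul_zero]
      rw [Finset.sum_eq_zero this]
      norm_num
    rw [h0] at this
    simp at this
  have hcoe : (g : PowerSeries K)
      = 1 - ∑ j ∈ range r, PowerSeries.C (c j) * PowerSeries.X ^ (r - j) := by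
    rw [hg, ← Polynomial.coeToPowerSeries.ringHom_apply, map_sub, _root_.map_one, map_sum]
    congr 1
    apply Finset.sum_congr rfl
    intro j _
    rw [_root_.map_mul, _root_.map_pow, Polynomial.coeToPowerSeries.ringHom_apply,
      Polynomial.coeToPowerSeries.ringHom_apply, Polynomial.coe_C, Polynomial.coe_X]
  have hvan : ∀ s, N + r < s → PowerSeries.coeff s ((g : PowerSeries K) * F) = 0 := by
    intro s hs
    rw [hcoe, sub_mul, one_mul, map_sub, Finset.sum_mul, map_sum]
    have hterm : ∀ j ∈ range r,
        PowerSeries.coeff s (PowerSeries.C (c j) * PowerSeries.X ^ (r - j) * F)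
          = c j * b ((s - r) + j) := by
      intro j hj
      have hjr := Finset.mem_range.1 hj
      rw [mul_assoc, PowerSeries.coeff_C_mul, mul_comm (PowerSeries.X ^ (r - j)) F,
        PowerSeries.coeff_mul_X_pow']
      have hle : r - j ≤ s := by omega
      rw [if_pos hle, hF]
      congr 2
      omega
    rw [Finset.sum_congr rfl hterm, hF]
    have hb : b s = b ((s - r) + r) := by congr 1; omega
    rw [hb, hrec (s - r) (by omega)]
    simp
  refine ⟨g, PowerSeries.trunc (N + r + 1) ((g : PowerSeries K) * F), hg0, ?_⟩
  ext d
  rw [Polynomial.coeff_coe, PowerSeries.coeff_trunc]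
  split_ifs with hd
  · rfl
  · exact hvan d (by omega)

end DetRatAux

/-- Every determinantally rational power series is pointwise rational. -/
theorem determinantallyRational_implies_pointwiseRational
    {A : Type*} [CommRing A] (f : PowerSeries A)
    (hf : DeterminantallyRational f) : PointwiseRational f := by
  obtain ⟨m, n, hdet⟩ := hf
  intro K _ φ
  set b : ℕ → K := fun i => φ (PowerSeries.coeff i f) with hb
  have hdetK : ∀ i > n, (DetRatAux.hk b (m + 1) i).det = 0 := by
    intro i hi
    have h1 := hdet i hi
    have h2 : DetRatAux.hk b (m + 1) i
        = (Matrix.of fun j k : Fin (m + 1) =>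
            PowerSeries.coeff (i + j.1 + k.1) f).map φ := by
      ext j k
      simp [DetRatAux.hk, hb, Matrix.map]
    rw [h2]
    have h3 := RingHom.map_det φ (Matrix.of fun j k : Fin (m + 1) =>
      PowerSeries.coeff (i + j.1 + k.1) f)
    rw [RingHom.mapMatrix_apply] at h3
    rw [← h3, h1, map_zero]
  obtain ⟨r, N, c, hrec⟩ := DetRatAux.key b m n hdetK
  exact DetRatAux.rational_of_recurrence b r N c hrec (PowerSeries.map φ f)
    (fun i => PowerSeries.coeff_map ..)
end

section
/- Let A = ℤ[x]/(x²). There exists a formal power series f ∈ A[[t]] that is determinantally rational but not globally rational. -/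
/-- The ring `A = ℤ[x]/(x²)`. -/
abbrev ZxModXSq : Type :=
  Polynomial ℤ ⧸ Ideal.span ({Polynomial.X ^ 2} : Set (Polynomial ℤ))

noncomputable section AuxDRNG

/-- The class of `x` in `ℤ[x]/(x²)`. -/
def epsA : ZxModXSq := Ideal.Quotient.mk _ Polynomial.X

/-- Evaluation at `0`, descended to the quotient. -/
def phiA : ZxModXSq →+* ℤ :=
  Ideal.Quotient.lift _ (Polynomial.evalRingHom 0) (by
    intro p hp
    rw [Ideal.mem_span_singleton] at hp
    obtain ⟨q, rfl⟩ := hp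
    simp)

lemma epsA_sq : epsA * epsA = 0 := by
  unfold epsA
  rw [← map_mul, ← sq]
  exact Ideal.Quotient.eq_zero_iff_mem.2 (Ideal.subset_span rfl)

lemma epsA_ne_zero : epsA ≠ 0 := by
  unfold epsA
  rw [Ne, Ideal.Quotient.eq_zero_iff_mem, Ideal.mem_span_singleton]
  intro hdvd
  have := Polynomial.natDegree_le_of_dvd hdvd Polynomial.X_ne_zero
  simp at this

lemma intCast_eq_mk (c : ℤ) :
    ((c : ZxModXSq)) = Ideal.Quotient.mk _ (Polynomial.C c) := by
  rw [← map_intCast (Ideal.Quotient.mk (Ideal.span ({Polynomial.X ^ 2} : Set (Polynomial ℤ)))) c]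
  congr 1

lemma epsA_mul (a : ZxModXSq) : epsA * a = epsA * ((phiA a : ℤ) : ZxModXSq) := by
  obtain ⟨p, rfl⟩ := Ideal.Quotient.mk_surjective a
  have hphi : phiA (Ideal.Quotient.mk _ p) = p.eval 0 := rfl
  rw [hphi, intCast_eq_mk]
  unfold epsA
  rw [← map_mul, ← map_mul, Ideal.Quotient.eq, Ideal.mem_span_singleton]
  have : Polynomial.X ∣ (p - Polynomial.C (p.eval 0)) := by
    rw [Polynomial.X_dvd_iff]
    simp [Polynomial.coeff_zero_eq_eval_zero]
  obtain ⟨r, hr⟩ := this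
  exact ⟨r, by rw [sq]; linear_combination (Polynomial.X : Polynomial ℤ) * hr⟩

lemma epsA_mul_int_eq_zero {c : ℤ} (h : epsA * (c : ZxModXSq) = 0) : c = 0 := by
  rw [intCast_eq_mk] at h
  unfold epsA at h
  rw [← map_mul, Ideal.Quotient.eq_zero_iff_mem, Ideal.mem_span_singleton] at h
  obtain ⟨r, hr⟩ := h
  have := congrArg (fun q => Polynomial.coeff q 1) hr
  simpa [sq, mul_assoc, Polynomial.coeff_X_mul] using this

open Classical in
/-- indicator of powers of two -/
def bfun : ℕ → ℤ := fun n => if ∃ k, n = 2 ^ k then 1 else 0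

/-- `Σ t^(2^k)` over `ℤ` -/
def Fser : PowerSeries ℤ := PowerSeries.mk bfun

/-- `Σ ε t^(2^k)` over `ℤ[x]/(x²)` -/
def fser : PowerSeries ZxModXSq := PowerSeries.mk fun n => epsA * ((bfun n : ℤ) : ZxModXSq)

lemma fser_detRat : DeterminantallyRational fser := by
  refine ⟨1, 0, fun i _ => ?_⟩
  have hz : ∀ a b : ZxModXSq, (epsA * a) * (epsA * b) = 0 := fun a b => by
    rw [mul_mul_mul_comm, epsA_sq, zero_mul]
  rw [Matrix.det_fin_two]
  simp only [Matrix.of_apply, fser, PowerSeries.coeff_mk]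
  rw [hz, hz, sub_self]

end AuxDRNG

/-- Over `ℤ[x]/(x²)` there is a power series which is determinantally rational but not
globally rational. -/
theorem exists_determinantallyRational_not_globallyRational :
    ∃ f : PowerSeries ZxModXSq,
      DeterminantallyRational f ∧ ¬ GloballyRational f := by
  classical
  refine ⟨fser, fser_detRat, ?_⟩
  rintro ⟨g, h, hgf, huniq⟩
  -- `g` is a non-zerodivisor
  have hreg : ∀ y : PowerSeries ZxModXSq, (g : PowerSeries ZxModXSq) * y = 0 → y = 0 := by
    intro y hy
    have h1 : fser + y = fser := huniq (fser + y) (by rw [mul_add, hgf, hy, add_zero])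
    have := congrArg (fun z => z - fser) h1
    simpa using this
  set Gp : Polynomial ℤ := g.map phiA with hGpdef
  -- `Gp ≠ 0`
  have hGp : Gp ≠ 0 := by
    intro h0
    have hcoef : ∀ p : ℕ, phiA (g.coeff p) = 0 := by
      intro p
      have := congrArg (fun q => Polynomial.coeff q p) h0
      simpa [hGpdef, Polynomial.coeff_map] using this
    have hz : (g : PowerSeries ZxModXSq) * PowerSeries.C epsA = 0 := by
      ext n
      rw [PowerSeries.coeff_mul_C, Polynomial.coeff_coe, mul_comm, epsA_mul, hcoef]
      simp
    have := congrArg (PowerSeries.coeff 0) (hreg _ hz)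
    simp at this
    exact epsA_ne_zero this
  -- key coefficient identity
  have hkey : ∀ n : ℕ, PowerSeries.coeff n ((g : PowerSeries ZxModXSq) * fser)
      = epsA * ((PowerSeries.coeff n ((Gp : PowerSeries ℤ) * Fser) : ℤ) : ZxModXSq) := by
    intro n
    rw [PowerSeries.coeff_mul, PowerSeries.coeff_mul]
    push_cast
    rw [Finset.mul_sum]
    refine Finset.sum_congr rfl ?_
    rintro ⟨p, q⟩ _
    simp only [fser, Fser, PowerSeries.coeff_mk, Polynomial.coeff_coe, hGpdef,
      Polynomial.coeff_map]
    rw [show (Polynomial.coeff g p) * (epsA * ((bfun q : ℤ) : ZxModXSq))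
        = (epsA * Polynomial.coeff g p) * ((bfun q : ℤ) : ZxModXSq) by ring,
      epsA_mul (Polynomial.coeff g p)]
    ring
  -- choice of the index
  set v := Gp.natTrailingDegree with hv
  set d := Gp.natDegree with hd
  set k := d + h.natDegree + 2 with hk
  set n := v + 2 ^ k with hn
  have hdk : d < 2 ^ (k - 1) :=
    lt_of_lt_of_le (Nat.lt_two_pow_self (n := d)) (Nat.pow_le_pow_right (by norm_num) (by omega))
  have hksplit : 2 ^ k = 2 ^ (k - 1) + 2 ^ (k - 1) := by
    have hkk : k - 1 + 1 = k := by omega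
    calc 2 ^ k = 2 ^ (k - 1 + 1) := by rw [hkk]
    _ = 2 ^ (k - 1) + 2 ^ (k - 1) := by rw [pow_succ]; ring
  have hnh : h.natDegree < n := by
    have h1 := Nat.lt_two_pow_self (n := k)
    omega
  -- value of the `n`-th coefficient of `Gp * Fser`
  have hc : PowerSeries.coeff n ((Gp : PowerSeries ℤ) * Fser) = Gp.coeff v := by
    rw [PowerSeries.coeff_mul]
    rw [Finset.sum_eq_single (v, 2 ^ k)]
    · simp only [Fser, PowerSeries.coeff_mk, Polynomial.coeff_coe, bfun]
      rw [if_pos ⟨k, rfl⟩, mul_one]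
    · rintro ⟨p, q⟩ hmem hne
      rw [Finset.HasAntidiagonal.mem_antidiagonal] at hmem
      simp only [Fser, PowerSeries.coeff_mk, Polynomial.coeff_coe]
      rcases lt_trichotomy p v with hpv | hpv | hpv
      · rw [Polynomial.coeff_eq_zero_of_lt_natTrailingDegree hpv, zero_mul]
      · exfalso
        apply hne
        have : q = 2 ^ k := by omega
        simp [hpv, this]
      · rcases le_or_gt p d with hpd | hpd
        · have hq : bfun q = 0 := by
            rw [bfun, if_neg]
            rintro ⟨j, rfl⟩
            have hlt : 2 ^ j < 2 ^ k := by omega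
            have hgt : 2 ^ (k - 1) < 2 ^ j := by omega
            have h1 : j < k := (Nat.pow_lt_pow_iff_right (by norm_num)).1 hlt
            have h2 : k - 1 < j := (Nat.pow_lt_pow_iff_right (by norm_num)).1 hgt
            omega
          rw [hq, mul_zero]
        · rw [Polynomial.coeff_eq_zero_of_natDegree_lt hpd, zero_mul]
    · intro habs
      exact absurd (Finset.HasAntidiagonal.mem_antidiagonal.2 hn.symm) habs
  -- contradiction
  have hzero : PowerSeries.coeff n ((g : PowerSeries ZxModXSq) * fser) = 0 := by
    rw [hgf, Polynomial.coeff_coe]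
    exact Polynomial.coeff_eq_zero_of_natDegree_lt hnh
  rw [hkey n, hc] at hzero
  exact Polynomial.coeff_natTrailingDegree_ne_zero.2 hGp (epsA_mul_int_eq_zero hzero)
end

section
/- Let A = ℤ[x₁, x₂, …]/(x₁², x₂², …), the polynomial ring over ℤ in countably many variables modulo the ideal generated by the squares of all the variables. The power series f(t) = Σ_{i≥1} x_i t^i ∈ A[[t]] is pointwise rational but not determinantally rational. -/
/-- The ring `A = ℤ[x₁, x₂, …]/(x₁², x₂², …)`: the polynomial ring over `ℤ` in countably many
variables `xᵢ` (indexed by positive naturals) modulo the squares of all variables. -/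
abbrev SquareZeroVarsRing : Type :=
  MvPolynomial ℕ+ ℤ ⧸
    Ideal.span (Set.range fun i : ℕ+ => (MvPolynomial.X i : MvPolynomial ℕ+ ℤ) ^ 2)

/-- The image of the variable `xᵢ` (for `i ≥ 1`) in `ℤ[x₁, x₂, …]/(x₁², x₂², …)`. -/
noncomputable def squareZeroVar (i : ℕ+) : SquareZeroVarsRing :=
  Ideal.Quotient.mk _ (MvPolynomial.X i)

/-- Constructor for `ℕ+` keeping the type syntactically `ℕ+`. -/
def pn (a : ℕ) (h : 0 < a) : ℕ+ := ⟨a, h⟩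

section Aux
open MvPolynomial

lemma aux_prod_X {ι σ' : Type*} (s : Finset ι) (c : ι → σ') :
    (∏ j ∈ s, (X (c j) : MvPolynomial σ' ℤ)) =
      monomial (∑ j ∈ s, Finsupp.single (c j) 1) 1 := by
  induction s using Finset.cons_induction with
  | empty => simp
  | cons a s ha ih =>
      rw [Finset.prod_cons, Finset.sum_cons, ih, monomial_single_add, pow_one]

lemma aux_sum_single_apply {α : Type*} [DecidableEq α] {r : ℕ} (c : Fin r → α) (s : α) :
    (∑ j : Fin r, Finsupp.single (c j) (1 : ℕ)) s
      = (Finset.univ.filter fun j => c j = s).card := by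
  rw [Finsupp.finset_sum_apply]
  simp [Finsupp.single_apply]

lemma aux_perm_eq_one {m : ℕ} (σ : Equiv.Perm (Fin (m + 1)))
    (h : ∀ j₀ : Fin (m + 1), ∃ j : Fin (m + 1), (j : ℕ) + (σ j : ℕ) = 2 * (j₀ : ℕ)) :
    σ = 1 := by
  have key : ∀ n, ∀ hn : n < m + 1, σ ⟨n, hn⟩ = ⟨n, hn⟩ := by
    intro n
    induction n using Nat.strong_induction_on with
    | _ n IH =>
      intro hn
      obtain ⟨j, hj⟩ := h ⟨n, hn⟩
      have hj : (j : ℕ) + (σ j : ℕ) = 2 * n := by simpa using hj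
      have hfix : ∀ k : Fin (m + 1), (k : ℕ) < n → σ k = k := by
        intro k hk
        have := IH k.1 hk k.isLt
        simpa [Fin.eta] using this
      have h1 : n ≤ (j : ℕ) := by
        by_contra hlt
        push_neg at hlt
        have := hfix j hlt
        rw [this] at hj
        omega
      have h2 : n ≤ ((σ j : Fin (m + 1)) : ℕ) := by
        by_contra hlt
        push_neg at hlt
        have hje : σ j = j := σ.injective (hfix (σ j) hlt)
        rw [hje] at hlt
        omega
      have hjn : (j : ℕ) = n := by omega
      have hj' : j = ⟨n, hn⟩ := Fin.ext hjn
      rw [← hj']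
      exact Fin.ext (by omega)
  refine Equiv.ext fun x => ?_
  have := key x.1 x.isLt
  simpa [Fin.eta] using this

lemma aux_coeff_zero_of_mem {q : MvPolynomial ℕ+ ℤ}
    (hq : q ∈ Ideal.span (Set.range fun s : ℕ+ => (X s : MvPolynomial ℕ+ ℤ) ^ 2)) :
    ∀ e : ℕ+ →₀ ℕ, (∀ s, e s ≤ 1) → coeff e q = 0 := by
  refine Submodule.span_induction ?_ ?_ ?_ ?_ hq
  · rintro x ⟨s, rfl⟩ e he
    show coeff e ((X s : MvPolynomial ℕ+ ℤ) ^ 2) = 0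
    rw [X_pow_eq_monomial, coeff_monomial, if_neg]
    intro hcon
    have := he s
    rw [← hcon] at this
    simp at this
  · intro e he
    simp
  · intro x y hx hy ihx ihy e he
    rw [coeff_add, ihx e he, ihy e he, add_zero]
  · intro a x hx ihx e he
    rw [smul_eq_mul, coeff_mul]
    refine Finset.sum_eq_zero fun p hp => ?_
    rw [Finset.HasAntidiagonal.mem_antidiagonal] at hp
    have h2 : ∀ s, p.2 s ≤ 1 := by
      intro s
      have : p.2 s ≤ e s := by
        rw [← hp]; simp
      exact this.trans (he s)
    rw [ihx p.2 h2, mul_zero]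

lemma hankel_det_not_mem (m i : ℕ) (hi : 0 < i) :
    (Matrix.det (Matrix.of fun j k : Fin (m + 1) =>
        (X (pn (i + j.1 + k.1) (by omega)) : MvPolynomial ℕ+ ℤ)))
      ∉ Ideal.span (Set.range fun s : ℕ+ => (X s : MvPolynomial ℕ+ ℤ) ^ 2) := by
  classical
  set c : Fin (m + 1) → ℕ+ := fun j => pn (i + 2 * j.1) (by omega) with hc
  set d : ℕ+ →₀ ℕ := ∑ j : Fin (m + 1), Finsupp.single (c j) 1 with hd
  have hd_le : ∀ s : ℕ+, d s ≤ 1 := by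
    intro s
    rw [hd, aux_sum_single_apply]
    refine Finset.card_le_one.mpr fun a ha b hb => ?_
    simp only [Finset.mem_filter] at ha hb
    have : c a = c b := ha.2.trans hb.2.symm
    have hv : i + 2 * a.1 = i + 2 * b.1 := congrArg Subtype.val this
    exact Fin.ext (by omega)
  intro hmem
  have h0 := aux_coeff_zero_of_mem hmem d hd_le
  -- now compute the coefficient to be 1
  rw [Matrix.det_apply, coeff_sum] at h0
  have hterm : ∀ σ : Equiv.Perm (Fin (m + 1)),
      coeff d (Equiv.Perm.sign σ • ∏ x : Fin (m + 1),
        (Matrix.of fun j k : Fin (m + 1) =>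
          (X (pn (i + j.1 + k.1) (by omega)) : MvPolynomial ℕ+ ℤ)) (σ x) x)
      = if σ = 1 then 1 else 0 := by
    intro σ
    have hprod : (∏ x : Fin (m + 1),
        (Matrix.of fun j k : Fin (m + 1) =>
          (X (pn (i + j.1 + k.1) (by omega)) : MvPolynomial ℕ+ ℤ)) (σ x) x)
        = monomial (∑ x : Fin (m + 1),
            Finsupp.single (pn (i + (σ x).1 + x.1) (by omega)) 1) 1 := by
      rw [show (∏ x : Fin (m + 1),
        (Matrix.of fun j k : Fin (m + 1) =>
          (X (pn (i + j.1 + k.1) (by omega)) : MvPolynomial ℕ+ ℤ)) (σ x) x)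
        = ∏ x : Fin (m + 1),
            (X (pn (i + (σ x).1 + x.1) (by omega)) : MvPolynomial ℕ+ ℤ) from rfl]
      exact aux_prod_X Finset.univ _
    rw [hprod, Units.smul_def, coeff_smul]
    simp only [coeff_monomial]
    by_cases hσ : σ = 1
    · subst hσ
      rw [if_pos, if_pos rfl]
      · simp
      · rw [hd]
        refine Finset.sum_congr rfl fun x _ => ?_
        congr 1
        exact Subtype.ext (by simp [pn, hc, Equiv.Perm.coe_one]; omega)
    · rw [if_neg, if_neg hσ, smul_zero]
      intro heq
      apply hσ
      apply aux_perm_eq_one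
      intro j₀
      have hcnt : ((Finset.univ.filter fun x : Fin (m + 1) =>
          pn (i + (σ x).1 + x.1) (by omega) = c j₀)).card
          = ((Finset.univ.filter fun x : Fin (m + 1) => c x = c j₀)).card := by
        rw [← aux_sum_single_apply, ← aux_sum_single_apply, heq, hd]
      have hpos : 0 < ((Finset.univ.filter fun x : Fin (m + 1) => c x = c j₀)).card :=
        Finset.card_pos.mpr ⟨j₀, by simp⟩
      rw [← hcnt] at hpos
      obtain ⟨x, hx⟩ := Finset.card_pos.mp hpos
      rw [Finset.mem_filter] at hx
      have hv : i + (σ x).1 + x.1 = i + 2 * j₀.1 := congrArg Subtype.val hx.2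
      exact ⟨x, by omega⟩
  rw [Finset.sum_congr rfl fun σ _ => hterm σ] at h0
  simp at h0


end Aux

/-- The power series `f(t) = Σ_{i≥1} xᵢ tⁱ` over `ℤ[x₁, x₂, …]/(x₁², x₂², …)` is pointwise
rational but not determinantally rational. -/
theorem pointwiseRational_not_determinantallyRational :
    PointwiseRational
      (PowerSeries.mk fun i => if h : 0 < i then squareZeroVar ⟨i, h⟩ else 0) ∧
    ¬ DeterminantallyRational
      (PowerSeries.mk fun i => if h : 0 < i then squareZeroVar ⟨i, h⟩ else 0) := by
  constructor
  · intro K _ φ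
    refine ⟨1, 0, one_ne_zero, ?_⟩
    have hzero : PowerSeries.map φ
        (PowerSeries.mk fun i => if h : 0 < i then squareZeroVar ⟨i, h⟩ else 0) = 0 := by
      ext k
      simp only [PowerSeries.coeff_map, PowerSeries.coeff_mk, map_zero]
      by_cases hk : 0 < k
      · rw [dif_pos hk]
        have hsq : squareZeroVar ⟨k, hk⟩ ^ 2 = 0 := by
          rw [show squareZeroVar ⟨k, hk⟩ = Ideal.Quotient.mk _ (MvPolynomial.X ⟨k, hk⟩) from rfl, ← map_pow]
          exact Ideal.Quotient.eq_zero_iff_mem.mpr (Ideal.subset_span ⟨⟨k, hk⟩, rfl⟩)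
        have h2 : φ (squareZeroVar ⟨k, hk⟩) ^ 2 = 0 := by rw [← map_pow, hsq, map_zero]
        exact pow_eq_zero_iff two_ne_zero |>.mp h2
      · rw [dif_neg hk, map_zero]
    rw [hzero, mul_zero]
    simp
  · rintro ⟨m, n, hdet⟩
    have h := hdet (n + 1) (Nat.lt_succ_self n)
    refine hankel_det_not_mem m (n + 1) (Nat.succ_pos n) ?_
    apply Ideal.Quotient.eq_zero_iff_mem.mp
    rw [RingHom.map_det]
    rw [← h]
    congr 1
    ext j k
    simp only [Matrix.map_apply, Matrix.of_apply, PowerSeries.coeff_mk]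
    rw [dif_pos (by omega : 0 < n + 1 + j.1 + k.1)]
    rfl
end

section
/- Let A be a commutative ring and let f ∈ A[[t]] be a power series with constant coefficient 1 (so f is a unit of A[[t]]). If f is globally rational, then its multiplicative inverse f⁻¹ ∈ A[[t]] is also globally rational. -/
/-- If `f ∈ A[[t]]` has constant coefficient `1` and is globally rational, then its
multiplicative inverse in `A[[t]]` is also globally rational. -/
theorem globallyRational_inv {A : Type*} [CommRing A] (f g : PowerSeries A)
    (h1 : PowerSeries.constantCoeff f = 1) (hfg : f * g = 1)
    (hf : GloballyRational f) : GloballyRational g := by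
  obtain ⟨p, q, hpq, huniq⟩ := hf
  refine ⟨q, p, ?_, ?_⟩
  · calc (q : PowerSeries A) * g = (p : PowerSeries A) * f * g := by rw [hpq]
      _ = (p : PowerSeries A) * (f * g) := by ring
      _ = (p : PowerSeries A) := by rw [hfg, mul_one]
  · intro x hx
    have key : f * x - 1 + f = f := by
      apply huniq
      calc (p : PowerSeries A) * (f * x - 1 + f)
          = (p : PowerSeries A) * f * x - (p : PowerSeries A) + (p : PowerSeries A) * f := by
            ring
        _ = (q : PowerSeries A) := by rw [hpq, hx]; ring
    have hfx : f * x = 1 := by linear_combination key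
    calc x = (g * f) * x := by rw [mul_comm g f, hfg, one_mul]
      _ = g * (f * x) := by ring
      _ = g := by rw [hfx, mul_one]
end

section
/- Let K be a field and f ∈ K[[t]]. Then f is rational, i.e. there exist polynomials g, h ∈ K[t] with g ≠ 0 and g·f = h, if and only if f is determinantally rational. -/
section HankelAux


variable {K : Type*} [Field K]

/-- Hankel determinant of size `s` starting at `i` for the sequence `a`. -/
private def Hdet (a : ℕ → K) (s i : ℕ) : K :=
  Matrix.det (Matrix.of fun j k : Fin s => a (i + j.1 + k.1))

private lemma key_lemma (a : ℕ → K) (s l : ℕ) (hbig : Hdet a (s + 2) l = 0)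
    (hA : Hdet a (s + 1) l = 0) : Hdet a (s + 1) (l + 1) = 0 := by
  by_contra hB
  obtain ⟨v, hv0, hv⟩ := Matrix.exists_vecMul_eq_zero_iff.mpr hA
  obtain ⟨z, hz0, hz⟩ := Matrix.exists_mulVec_eq_zero_iff.mpr hbig
  have hv' : ∀ k : Fin (s + 1), ∑ j : Fin (s + 1), v j * a (l + j.1 + k.1) = 0 := by
    intro k
    have := congrFun hv k
    simpa [Matrix.vecMul, dotProduct] using this
  have hz' : ∀ j : Fin (s + 2), ∑ k : Fin (s + 2), a (l + j.1 + k.1) * z k = 0 := by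
    intro j
    have := congrFun hz j
    simpa [Matrix.mulVec, dotProduct] using this
  set γ : K := ∑ j : Fin (s + 1), v j * a (l + j.1 + (s + 1)) with hγ
  by_cases hγ0 : γ = 0
  · -- v is also a kernel (row) vector for the shifted matrix
    have hvk : ∀ t : ℕ, t ≤ s + 1 → ∑ j : Fin (s + 1), v j * a (l + j.1 + t) = 0 := by
      intro t ht
      rcases Nat.lt_or_ge t (s + 1) with h | h
      · exact hv' ⟨t, h⟩
      · have : t = s + 1 := by omega
        rw [this]; exact hγ0
    apply hB
    apply Matrix.exists_vecMul_eq_zero_iff.mp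
    refine ⟨v, hv0, ?_⟩
    funext k
    have := hvk (k.1 + 1) (by have := k.isLt; omega)
    simp only [Matrix.vecMul, dotProduct, Matrix.of_apply, Pi.zero_apply]
    rw [← this]
    refine Finset.sum_congr rfl fun j _ => ?_
    show v j * a (l + 1 + j.1 + k.1) = v j * a (l + j.1 + (k.1 + 1))
    rw [show l + 1 + j.1 + k.1 = l + j.1 + (k.1 + 1) by omega]
  · -- last entry of z is zero, and z restricted kills the shifted matrix
    have hzlast : z (Fin.last (s + 1)) = 0 := by
      have hD : ∑ j : Fin (s + 1), v j * (∑ k : Fin (s + 2), a (l + j.1 + k.1) * z k) = 0 := by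
        apply Finset.sum_eq_zero
        intro j _
        have := hz' j.castSucc
        rw [show (j.castSucc).1 = j.1 from rfl] at this
        rw [this, mul_zero]
      have hswap : ∑ j : Fin (s + 1), v j * (∑ k : Fin (s + 2), a (l + j.1 + k.1) * z k)
          = ∑ k : Fin (s + 2), z k * (∑ j : Fin (s + 1), v j * a (l + j.1 + k.1)) := by
        simp_rw [Finset.mul_sum]
        rw [Finset.sum_comm]
        exact Finset.sum_congr rfl fun k _ => Finset.sum_congr rfl fun j _ => by ring
      rw [hswap] at hD
      rw [Fin.sum_univ_castSucc] at hD
      have hzero : ∀ k : Fin (s + 1),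
          z k.castSucc * (∑ j : Fin (s + 1), v j * a (l + j.1 + (k.castSucc).1)) = 0 := by
        intro k
        rw [show (k.castSucc).1 = k.1 from rfl, hv' k, mul_zero]
      rw [Finset.sum_eq_zero (fun k _ => hzero k), zero_add] at hD
      have : (Fin.last (s + 1)).1 = s + 1 := rfl
      rw [this] at hD
      rw [← hγ] at hD
      rcases mul_eq_zero.mp hD with h | h
      · exact h
      · exact absurd h hγ0
    apply hB
    apply Matrix.exists_mulVec_eq_zero_iff.mp
    refine ⟨fun k : Fin (s + 1) => z k.castSucc, ?_, ?_⟩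
    · intro h
      apply hz0
      funext k
      refine Fin.lastCases ?_ ?_ k
      · exact hzlast
      · intro k'; exact congrFun h k'
    · funext j
      simp only [Matrix.mulVec, dotProduct, Matrix.of_apply, Pi.zero_apply]
      have := hz' j.succ
      rw [Fin.sum_univ_castSucc] at this
      rw [show (Fin.last (s+1)).1 = s + 1 from rfl, hzlast, mul_zero, add_zero] at this
      rw [← this]
      refine Finset.sum_congr rfl fun k _ => ?_
      show a (l + 1 + j.1 + k.1) * z k.castSucc = a (l + (j.succ).1 + (k.castSucc).1) * z k.castSucc
      rw [show (j.succ).1 = j.1 + 1 from rfl, show (k.castSucc).1 = k.1 from rfl]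
      rw [show l + 1 + j.1 + k.1 = l + (j.1 + 1) + k.1 by omega]


private lemma recur_lemma (a : ℕ → K) (M n : ℕ)
    (hNZ : ∀ i > n, Hdet a (M + 1) i ≠ 0)
    (hZ : ∀ i > n, Hdet a (M + 2) i = 0) :
    ∃ c : Fin (M + 1) → K, ∀ q ≥ n + 1,
      a (q + (M + 1)) = ∑ j : Fin (M + 1), c j * a (q + j.1) := by
  set A0 : Matrix (Fin (M + 1)) (Fin (M + 1)) K :=
    Matrix.of (fun k j : Fin (M + 1) => a (n + 1 + k.1 + j.1)) with hA0def
  have hA0 : IsUnit A0.det := by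
    rw [isUnit_iff_ne_zero]
    exact hNZ (n + 1) (by omega)
  set c : Fin (M + 1) → K := A0⁻¹.mulVec (fun k => a (n + 1 + k.1 + (M + 1))) with hcdef
  have hbase : ∀ k : Fin (M + 1),
      ∑ j : Fin (M + 1), a (n + 1 + k.1 + j.1) * c j = a (n + 1 + k.1 + (M + 1)) := by
    have h : A0.mulVec c = fun k => a (n + 1 + k.1 + (M + 1)) := by
      rw [hcdef, Matrix.mulVec_mulVec, Matrix.mul_nonsing_inv _ hA0, Matrix.one_mulVec]
    intro k
    have := congrFun h k
    simpa [Matrix.mulVec, dotProduct, hA0def] using this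
  refine ⟨c, ?_⟩
  intro q hq
  induction q using Nat.strong_induction_on with
  | _ q ih =>
  rcases Nat.lt_or_ge q (n + 1 + (M + 1)) with hsmall | hlarge
  · -- base range
    have hk : q - (n + 1) < M + 1 := by omega
    have hb' : ∑ j : Fin (M + 1), a (n + 1 + (q - (n + 1)) + j.1) * c j
        = a (n + 1 + (q - (n + 1)) + (M + 1)) := hbase ⟨q - (n + 1), hk⟩
    have hq' : q = n + 1 + (q - (n + 1)) := by omega
    rw [hq', ← hb']
    exact Finset.sum_congr rfl fun j _ => mul_comm _ _
  · -- inductive step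
    set i := q - (M + 1) with hidef
    have hqi : q = i + (M + 1) := by omega
    have hin : i > n := by omega
    obtain ⟨e, he0, he⟩ := Matrix.exists_vecMul_eq_zero_iff.mpr (hZ i hin)
    have he' : ∀ k : Fin (M + 2), ∑ j : Fin (M + 2), e j * a (i + j.1 + k.1) = 0 := by
      intro k
      have := congrFun he k
      simpa [Matrix.vecMul, dotProduct] using this
    have helast : e (Fin.last (M + 1)) ≠ 0 := by
      intro h0
      apply hNZ i hin
      apply Matrix.exists_vecMul_eq_zero_iff.mp
      refine ⟨fun j : Fin (M + 1) => e j.castSucc, ?_, ?_⟩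
      · intro h
        apply he0
        funext j
        refine Fin.lastCases ?_ ?_ j
        · exact h0
        · intro j'; exact congrFun h j'
      · funext k
        simp only [Matrix.vecMul, dotProduct, Matrix.of_apply, Pi.zero_apply]
        have h := he' k.castSucc
        rw [Fin.sum_univ_castSucc, show (Fin.last (M + 1)).1 = M + 1 from rfl, h0, zero_mul,
          add_zero] at h
        exact h
    set d : Fin (M + 1) → K := fun l => -(e l.castSucc) / e (Fin.last (M + 1)) with hddef
    have hd : ∀ k : ℕ, k ≤ M + 1 → a (q + k) = ∑ l : Fin (M + 1), d l * a (i + l.1 + k) := by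
      intro k hk
      have hrel : ∑ l : Fin (M + 1), e l.castSucc * a (i + l.1 + k)
          + e (Fin.last (M + 1)) * a (i + (M + 1) + k) = 0 := by
        have h := he' ⟨k, by omega⟩
        rw [Fin.sum_univ_castSucc] at h
        exact h
      have h2 : e (Fin.last (M + 1)) * a (q + k)
          = -∑ l : Fin (M + 1), e l.castSucc * a (i + l.1 + k) := by
        rw [hqi]
        exact eq_neg_of_add_eq_zero_right hrel
      have h3 : ∑ l : Fin (M + 1), d l * a (i + l.1 + k)
          = (-∑ l : Fin (M + 1), e l.castSucc * a (i + l.1 + k)) / e (Fin.last (M + 1)) := by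
        rw [eq_div_iff helast, Finset.sum_mul, ← Finset.sum_neg_distrib]
        refine Finset.sum_congr rfl fun l _ => ?_
        rw [hddef]
        field_simp
      rw [h3, ← h2, mul_div_cancel_left₀ _ helast]
    calc a (q + (M + 1)) = ∑ l : Fin (M + 1), d l * a (i + l.1 + (M + 1)) :=
          hd (M + 1) le_rfl
      _ = ∑ l : Fin (M + 1), d l * (∑ j : Fin (M + 1), c j * a (i + l.1 + j.1)) := by
          refine Finset.sum_congr rfl fun l _ => ?_
          rw [ih (i + l.1) (by have := l.isLt; omega) (by omega)]
      _ = ∑ j : Fin (M + 1), c j * (∑ l : Fin (M + 1), d l * a (i + l.1 + j.1)) := by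
          simp_rw [Finset.mul_sum]
          rw [Finset.sum_comm]
          exact Finset.sum_congr rfl fun j _ => Finset.sum_congr rfl fun l _ => by ring
      _ = ∑ j : Fin (M + 1), c j * a (q + j.1) := by
          refine Finset.sum_congr rfl fun j _ => ?_
          rw [← hd j.1 (by have := j.isLt; omega)]


private lemma ratOfRec (f : PowerSeries K) (M Q : ℕ) (c : Fin M → K)
    (hrec : ∀ q ≥ Q, PowerSeries.coeff (q + M) f
      = ∑ j : Fin M, c j * PowerSeries.coeff (q + j.1) f) :
    ∃ g h : Polynomial K, g ≠ 0 ∧ (g : PowerSeries K) * f = (h : PowerSeries K) := by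
  set g : Polynomial K := 1 - ∑ j : Fin M, Polynomial.C (c j) * Polynomial.X ^ (M - j.1)
    with hgdef
  have hg0 : g ≠ 0 := by
    intro h
    have hc : g.coeff 0 = 1 := by
      rw [hgdef]
      rw [Polynomial.coeff_sub, Polynomial.coeff_one, Polynomial.finset_sum_coeff]
      have : ∀ j : Fin M, (Polynomial.C (c j) * Polynomial.X ^ (M - j.1)).coeff 0 = 0 := by
        intro j
        rw [Polynomial.coeff_C_mul, Polynomial.coeff_X_pow]
        have : ¬(0 = M - j.1) := by have := j.isLt; omega
        simp [this]
      rw [Finset.sum_eq_zero fun j _ => this j]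
      simp
    rw [h] at hc
    simp at hc
  have hcoe : (g : PowerSeries K)
      = 1 - ∑ j : Fin M, PowerSeries.C (c j) * PowerSeries.X ^ (M - j.1) := by
    rw [hgdef]
    push_cast
    simp only [← Polynomial.coeToPowerSeries.ringHom_apply, map_sub, map_one, map_sum, map_mul,
      map_pow]
    simp [Polynomial.coeToPowerSeries.ringHom_apply]
  have hvan : ∀ N, N ≥ Q + M → PowerSeries.coeff N ((g : PowerSeries K) * f) = 0 := by
    intro N hN
    rw [hcoe, sub_mul, one_mul, Finset.sum_mul, map_sub, map_sum]
    have hterm : ∀ j : Fin M,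
        PowerSeries.coeff N (PowerSeries.C (c j) * PowerSeries.X ^ (M - j.1) * f)
        = c j * PowerSeries.coeff (N - (M - j.1)) f := by
      intro j
      rw [mul_assoc, PowerSeries.coeff_C_mul]
      congr 1
      conv_lhs => rw [show N = (N - (M - j.1)) + (M - j.1) by have := j.isLt; omega]
      rw [PowerSeries.coeff_X_pow_mul]
    rw [Finset.sum_congr rfl fun j _ => hterm j]
    have h := hrec (N - M) (by omega)
    rw [show N - M + M = N by omega] at h
    rw [h]
    rw [sub_eq_zero]
    refine Finset.sum_congr rfl fun j _ => ?_
    rw [show N - (M - j.1) = N - M + j.1 by have := j.isLt; omega]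
  refine ⟨g, PowerSeries.trunc (Q + M) ((g : PowerSeries K) * f), hg0, ?_⟩
  ext N
  rw [Polynomial.coeff_coe, PowerSeries.coeff_trunc]
  split
  · rfl
  · exact hvan N (by omega)


private lemma forward_dir (f : PowerSeries K) (g h : Polynomial K) (hg0 : g ≠ 0)
    (hgf : (g : PowerSeries K) * f = (h : PowerSeries K)) (i : ℕ) (hi : i > h.natDegree) :
    Matrix.det (Matrix.of fun j k : Fin (g.natDegree + 1) =>
      PowerSeries.coeff (i + j.1 + k.1) f) = 0 := by
  set m := g.natDegree with hm
  apply Matrix.exists_mulVec_eq_zero_iff.mp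
  refine ⟨fun k : Fin (m + 1) => g.coeff (m - k.1), ?_, ?_⟩
  · intro hv
    have h0 : g.coeff (m - ((0 : Fin (m + 1)) : ℕ)) = 0 := congrFun hv 0
    rw [Fin.val_zero, Nat.sub_zero] at h0
    refine Polynomial.leadingCoeff_ne_zero.mpr hg0 ?_
    rw [Polynomial.leadingCoeff, ← hm]
    exact h0
  · funext j
    simp only [Matrix.mulVec, dotProduct, Matrix.of_apply, Pi.zero_apply]
    set N := i + j.1 + m with hN
    have hcoeff : PowerSeries.coeff N ((g : PowerSeries K) * f) = 0 := by
      rw [hgf, Polynomial.coeff_coe]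
      exact Polynomial.coeff_eq_zero_of_natDegree_lt (by omega)
    rw [PowerSeries.coeff_mul, Finset.Nat.sum_antidiagonal_eq_sum_range_succ_mk] at hcoeff
    simp_rw [Polynomial.coeff_coe] at hcoeff
    have hsub : ∑ s ∈ Finset.range (m + 1), g.coeff s * PowerSeries.coeff (N - s) f
        = ∑ s ∈ Finset.range (N + 1), g.coeff s * PowerSeries.coeff (N - s) f := by
      apply Finset.sum_subset (Finset.range_subset_range.mpr (by omega))
      intro s hs hns
      rw [Polynomial.coeff_eq_zero_of_natDegree_lt
        (by simp only [Finset.mem_range] at hns ⊢; omega), zero_mul]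
    have hrefl := Finset.sum_range_reflect
      (fun s => g.coeff s * PowerSeries.coeff (N - s) f) (m + 1)
    calc ∑ k : Fin (m + 1), PowerSeries.coeff (i + j.1 + k.1) f * g.coeff (m - k.1)
        = ∑ k ∈ Finset.range (m + 1),
            PowerSeries.coeff (i + j.1 + k) f * g.coeff (m - k) :=
          Fin.sum_univ_eq_sum_range
            (fun k => PowerSeries.coeff (i + j.1 + k) f * g.coeff (m - k)) (m + 1)
      _ = ∑ k ∈ Finset.range (m + 1),
            g.coeff (m + 1 - 1 - k) * PowerSeries.coeff (N - (m + 1 - 1 - k)) f := by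
          refine Finset.sum_congr rfl fun k hk => ?_
          simp only [Finset.mem_range] at hk
          rw [show m + 1 - 1 - k = m - k by omega,
            show N - (m - k) = i + j.1 + k by omega, mul_comm]
      _ = ∑ s ∈ Finset.range (m + 1), g.coeff s * PowerSeries.coeff (N - s) f := hrefl
      _ = 0 := by rw [hsub]; exact hcoeff

private lemma mainT (f : PowerSeries K) :
    ∀ m n : ℕ, (∀ i > n, Hdet (fun N => PowerSeries.coeff N f) (m + 1) i = 0) →
    ∃ g h : Polynomial K, g ≠ 0 ∧ (g : PowerSeries K) * f = (h : PowerSeries K) := by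
  intro m
  induction m using Nat.strong_induction_on with
  | _ m ihm =>
  intro n hZ
  match m, ihm, hZ with
  | 0, ihm, hZ =>
    apply ratOfRec f 0 (n + 1) (fun j => j.elim0)
    intro q hq
    have h1 : Hdet (fun N => PowerSeries.coeff N f) 1 q = 0 := hZ q (by omega)
    rw [Hdet, Matrix.det_fin_one] at h1
    simp only [Finset.univ_eq_empty, Finset.sum_empty]
    exact h1
  | m' + 1, ihm, hZ =>
    by_cases hA : ∃ j > n, Hdet (fun N => PowerSeries.coeff N f) (m' + 1) j = 0
    · obtain ⟨j0, hj0, hj⟩ := hA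
      have hall : ∀ t : ℕ, Hdet (fun N => PowerSeries.coeff N f) (m' + 1) (j0 + t) = 0 := by
        intro t
        induction t with
        | zero => exact hj
        | succ t iht =>
          exact key_lemma (fun N => PowerSeries.coeff N f) m' (j0 + t)
            (hZ (j0 + t) (by omega)) iht
      apply ihm m' (by omega) j0
      intro i hi
      have h1 := hall (i - j0)
      rw [show j0 + (i - j0) = i by omega] at h1
      exact h1
    · push_neg at hA
      obtain ⟨c, hc⟩ := recur_lemma (fun N => PowerSeries.coeff N f) m' n hA hZ
      exact ratOfRec f (m' + 1) (n + 1) c hc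

end HankelAux

/-- Over a field, a power series is rational (a ratio of polynomials) if and only if it is
determinantally rational. -/
theorem rational_iff_determinantallyRational {K : Type*} [Field K] (f : PowerSeries K) :
    (∃ g h : Polynomial K, g ≠ 0 ∧
      (g : PowerSeries K) * f = (h : PowerSeries K)) ↔
    DeterminantallyRational f := by
  constructor
  · rintro ⟨g, h, hg0, hgf⟩
    exact ⟨g.natDegree, h.natDegree, fun i hi => forward_dir f g h hg0 hgf i hi⟩
  · rintro ⟨m, n, hmn⟩
    exact mainT f m n hmn
end

section
/- With G, F, ι, Θ as in the context, let f = Σ_{i≥0} g_i t^i ∈ Θ. Suppose there exist an integer n ≥ 1, an index i₀ ∈ ℕ, and a sequence (h_i)_{i∈ℕ} of elements of G with h_{i+n} = h_i for all i, such that g_{i+n} = ι(h_i)·g_i in F for all i > i₀. Then f is rational over F, i.e. there exist polynomials q, p ∈ F[t] with q ≠ 0 and q·f = p. -/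
open PowerSeries

/-- Shift coefficient formula for multiplication by `1 - C a * X^n`. -/
lemma coeff_one_sub_C_mul_X_pow_mul {K : Type*} [CommRing K] (a : K) (F : PowerSeries K)
    (n m : ℕ) (hm : n ≤ m) :
    PowerSeries.coeff (R := K) m ((1 - PowerSeries.C (R := K) a * PowerSeries.X ^ n) * F) =
      PowerSeries.coeff (R := K) m F - a * PowerSeries.coeff (R := K) (m - n) F := by
  have h1 : (1 - PowerSeries.C (R := K) a * PowerSeries.X ^ n) * F
      = F - PowerSeries.C (R := K) a * (PowerSeries.X ^ n * F) := by ring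
  have h2 : m - n + n = m := Nat.sub_add_cancel hm
  rw [h1, map_sub, PowerSeries.coeff_C_mul]
  congr 2
  conv_lhs => rw [← h2]
  exact PowerSeries.coeff_X_pow_mul F n (m - n)

lemma aux_annihilator {K : Type*} [CommRing K] (n : ℕ) (hn : 1 ≤ n) (i₀ : ℕ)
    (g a : ℕ → K) (hper : ∀ i, a (i + n) = a i)
    (hrec : ∀ i > i₀, g (i + n) = a i * g i) :
    ∃ q : Polynomial K, q.coeff 0 = 1 ∧ ∃ N, ∀ m, N ≤ m →
      PowerSeries.coeff (R := K) m ((q : PowerSeries K) * PowerSeries.mk g) = 0 := by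
  -- periodicity: a k = a (k % n)
  have gen : ∀ d r, a (r + d * n) = a r := by
    intro d
    induction d with
    | zero => simp
    | succ d ih =>
      intro r
      have : r + (d + 1) * n = (r + d * n) + n := by ring
      rw [this, hper, ih]
  have amod : ∀ k, a k = a (k % n) := by
    intro k
    calc a k = a (k % n + (k / n) * n) := by rw [Nat.mod_add_div' k n]
      _ = a (k % n) := gen _ _
  -- the key induction over a finite set of residues
  have claim : ∀ s : Finset ℕ, ∃ N, n ≤ N ∧ ∀ m, N ≤ m →
      (PowerSeries.coeff (R := K) m
          ((∏ r ∈ s, (1 - PowerSeries.C (R := K) (a r) * PowerSeries.X ^ n)) * PowerSeries.mk g)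
        = a (m % n) * PowerSeries.coeff (R := K) (m - n)
          ((∏ r ∈ s, (1 - PowerSeries.C (R := K) (a r) * PowerSeries.X ^ n)) * PowerSeries.mk g)) ∧
      (m % n ∈ s → PowerSeries.coeff (R := K) m
          ((∏ r ∈ s, (1 - PowerSeries.C (R := K) (a r) * PowerSeries.X ^ n)) * PowerSeries.mk g) = 0) := by
    intro s
    induction s using Finset.induction_on with
    | empty =>
      refine ⟨i₀ + n + 1, by omega, fun m hm => ?_⟩
      have h1 : m - n + n = m := by omega
      have h2 : m - n > i₀ := by omega
      have h3 : m % n = (m - n) % n := by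
        conv_lhs => rw [← h1]
        rw [Nat.add_mod_right]
      constructor
      · simp only [Finset.prod_empty, one_mul, PowerSeries.coeff_mk]
        calc g m = g (m - n + n) := by rw [h1]
          _ = a (m - n) * g (m - n) := hrec _ h2
          _ = a (m % n) * g (m - n) := by rw [amod (m - n), ← h3]
      · intro hmem; exact absurd hmem (Finset.notMem_empty _)
    | @insert r s hr ih =>
      obtain ⟨N, hNn, hN⟩ := ih
      set F : PowerSeries K :=
        (∏ r ∈ s, (1 - PowerSeries.C (R := K) (a r) * PowerSeries.X ^ n)) * PowerSeries.mk g with hF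
      have hprod : (∏ x ∈ insert r s, (1 - PowerSeries.C (R := K) (a x) * PowerSeries.X ^ n))
          * PowerSeries.mk g
          = (1 - PowerSeries.C (R := K) (a r) * PowerSeries.X ^ n) * F := by
        rw [Finset.prod_insert hr, mul_assoc]
      refine ⟨N + n + n, by omega, fun m hm => ?_⟩
      have hmn : n ≤ m := by omega
      have hmn2 : n ≤ m - n := by omega
      have hNm : N ≤ m := by omega
      have hNmn : N ≤ m - n := by omega
      have hresid : (m - n) % n = m % n := by
        conv_rhs => rw [← Nat.sub_add_cancel hmn]
        rw [Nat.add_mod_right]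
      have key : ∀ k, n ≤ k → PowerSeries.coeff (R := K) k
          ((∏ x ∈ insert r s, (1 - PowerSeries.C (R := K) (a x) * PowerSeries.X ^ n))
            * PowerSeries.mk g)
          = PowerSeries.coeff (R := K) k F - a r * PowerSeries.coeff (R := K) (k - n) F := by
        intro k hk
        rw [hprod]
        exact coeff_one_sub_C_mul_X_pow_mul (a r) F n k hk
      have e1 : PowerSeries.coeff (R := K) m F = a (m % n) * PowerSeries.coeff (R := K) (m - n) F :=
        (hN m hNm).1
      have e2 : PowerSeries.coeff (R := K) (m - n) F
          = a (m % n) * PowerSeries.coeff (R := K) (m - n - n) F := by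
        have := (hN (m - n) hNmn).1
        rwa [hresid] at this
      constructor
      · rw [key m hmn, key (m - n) hmn2, e1, e2]; ring
      · intro hmem
        rcases Finset.mem_insert.mp hmem with hmr | hms
        · rw [key m hmn, e1, ← hmr]; ring
        · have z1 : PowerSeries.coeff (R := K) m F = 0 := (hN m hNm).2 hms
          have z2 : PowerSeries.coeff (R := K) (m - n) F = 0 := by
            refine (hN (m - n) hNmn).2 ?_
            rwa [hresid]
          rw [key m hmn, z1, z2]; ring
  obtain ⟨N, hNn, hN⟩ := claim (Finset.range n)
  refine ⟨∏ r ∈ Finset.range n, (1 - Polynomial.C (a r) * Polynomial.X ^ n), ?_, N, ?_⟩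
  · -- constant coefficient is 1
    rw [Polynomial.coeff_zero_eq_eval_zero, Polynomial.eval_prod]
    simp [zero_pow (by omega : n ≠ 0)]
  · intro m hm
    have hcoe : ((∏ r ∈ Finset.range n,
        (1 - Polynomial.C (a r) * Polynomial.X ^ n) : Polynomial K) : PowerSeries K)
        = ∏ r ∈ Finset.range n, (1 - PowerSeries.C (R := K) (a r) * PowerSeries.X ^ n) := by
      have := map_prod Polynomial.coeToPowerSeries.ringHom
        (fun r => (1 - Polynomial.C (a r) * Polynomial.X ^ n)) (Finset.range n)
      simp only [Polynomial.coeToPowerSeries.ringHom_apply, map_sub, map_one, map_mul,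
        map_pow] at this
      rw [this]
      simp only [Polynomial.coeToPowerSeries.ringHom_apply, Polynomial.coe_C,
        Polynomial.coe_X]
    rw [hcoe]
    exact (hN m hm).2 (Finset.mem_range.mpr (Nat.mod_lt _ hn))

/-- Let `G` be a free abelian group (written multiplicatively), `ℤ[G]` its group ring (an
integral domain), and `F` its field of fractions.  If the coefficient sequence `g : ℕ → F` of a
power series `Σ gᵢ tⁱ`, all of whose coefficients are `0` or elements of `G`, is eventually
periodically-geometric — i.e. there are `n ≥ 1`, `i₀` and a sequence `hᵢ ∈ G`, periodic with
period `n`, with `g_{i+n} = hᵢ · gᵢ` for `i > i₀` — then the power series is rational over `F`. -/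
theorem rational_of_eventually_periodic_ratios
    {G : Type*} [CommGroup G] [Module.Free ℤ (Additive G)]
    [IsDomain (MonoidAlgebra ℤ G)]
    (g : ℕ → FractionRing (MonoidAlgebra ℤ G))
    (hΘ : ∀ i, g i = 0 ∨ ∃ γ : G, g i =
      algebraMap (MonoidAlgebra ℤ G) (FractionRing (MonoidAlgebra ℤ G))
        (MonoidAlgebra.of ℤ G γ))
    (n : ℕ) (hn : 1 ≤ n) (i₀ : ℕ) (h : ℕ → G)
    (hper : ∀ i, h (i + n) = h i)
    (hrec : ∀ i > i₀, g (i + n) =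
      algebraMap (MonoidAlgebra ℤ G) (FractionRing (MonoidAlgebra ℤ G))
        (MonoidAlgebra.of ℤ G (h i)) * g i) :
    ∃ q p : Polynomial (FractionRing (MonoidAlgebra ℤ G)), q ≠ 0 ∧
      (q : PowerSeries (FractionRing (MonoidAlgebra ℤ G))) * PowerSeries.mk g =
        (p : PowerSeries (FractionRing (MonoidAlgebra ℤ G))) := by
  obtain ⟨q, hq0, N, hN⟩ := aux_annihilator n hn i₀ g
    (fun i => algebraMap (MonoidAlgebra ℤ G) (FractionRing (MonoidAlgebra ℤ G))
      (MonoidAlgebra.of ℤ G (h i)))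
    (fun i => by simp [hper i]) hrec
  refine ⟨q, PowerSeries.trunc N
    ((q : PowerSeries (FractionRing (MonoidAlgebra ℤ G))) * PowerSeries.mk g), ?_, ?_⟩
  · intro h0
    rw [h0] at hq0
    simp at hq0
  · ext m
    rw [Polynomial.coeff_coe, PowerSeries.coeff_trunc]
    split_ifs with hmN
    · rfl
    · exact hN m (by omega)
end

section
/- Let M be the multiplicative monoid of polynomials p ∈ ℤ[s] with constant coefficient p(0) = 1. Then M is a free commutative monoid: every p ∈ M can be written as the product of a multiset of polynomials, each of which lies in M and is a prime element of the ring ℤ[s], and this multiset is uniquely determined by p. -/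
open Polynomial

/-- Two associated polynomials with constant coefficient 1 are equal. -/
lemma assoc_eq_of_constantCoeff_one {q r : Polynomial ℤ}
    (hq : q.coeff 0 = 1) (hr : r.coeff 0 = 1) (h : Associated q r) : q = r := by
  obtain ⟨u, hu⟩ := h
  obtain ⟨a, ha, hCa⟩ := Polynomial.isUnit_iff.mp u.isUnit
  have hc : (q * (u : Polynomial ℤ)).coeff 0 = r.coeff 0 := by rw [hu]
  rw [Polynomial.mul_coeff_zero, hq, hr, ← hCa, Polynomial.coeff_C_zero, one_mul] at hc
  have : (u : Polynomial ℤ) = 1 := by rw [← hCa, hc, map_one]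
  rw [← hu, this, mul_one]

lemma prod_coeff_zero (m : Multiset (Polynomial ℤ)) :
    m.prod.coeff 0 = (m.map (fun q => q.coeff 0)).prod := by
  have := map_multiset_prod (Polynomial.constantCoeff (R := ℤ)) m
  simpa [Polynomial.constantCoeff_apply, Multiset.map_map, Function.comp] using this

/-- The monoid `M` of polynomials in `ℤ[s]` with constant coefficient `1` is a free commutative
monoid: every such polynomial is the product of a unique multiset of prime polynomials with
constant coefficient `1`. -/
theorem unique_prime_factorization_constantCoeff_one
    (p : Polynomial ℤ) (hp : p.coeff 0 = 1) :
    ∃! m : Multiset (Polynomial ℤ),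
      (∀ q ∈ m, q.coeff 0 = 1 ∧ Prime q) ∧ m.prod = p := by
  have hp0 : p ≠ 0 := by intro h; simp [h] at hp
  obtain ⟨f, hf, hfp⟩ := UniqueFactorizationMonoid.exists_prime_factors p hp0
  -- constant coefficients of factors are units
  have hunit : IsUnit ((f.map (fun q => q.coeff 0)).prod) := by
    have h1 : Associated (f.prod.coeff 0) (p.coeff 0) := by
      simpa [Polynomial.constantCoeff_apply] using
        hfp.map (Polynomial.constantCoeff (R := ℤ))
    rw [hp] at h1
    rw [← prod_coeff_zero]
    exact h1.symm.isUnit isUnit_one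
  have hqu : ∀ q ∈ f, IsUnit (q.coeff 0) := by
    intro q hq
    exact isUnit_of_dvd_unit (Multiset.dvd_prod (Multiset.mem_map_of_mem (fun q => q.coeff 0) hq)) hunit
  -- normalized multiset
  set g : Multiset (Polynomial ℤ) := f.map (fun q => Polynomial.C (q.coeff 0) * q) with hg
  have hgmem : ∀ r ∈ g, r.coeff 0 = 1 ∧ Prime r := by
    intro r hr
    rw [hg, Multiset.mem_map] at hr
    obtain ⟨q, hq, rfl⟩ := hr
    constructor
    · rw [Polynomial.mul_coeff_zero, Polynomial.coeff_C_zero]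
      rcases Int.isUnit_iff.mp (hqu q hq) with h | h <;> rw [h] <;> ring
    · have hassoc : Associated q (Polynomial.C (q.coeff 0) * q) :=
        ⟨((hqu q hq).map Polynomial.C).unit, by rw [IsUnit.unit_spec, mul_comm]⟩
      exact hassoc.prime (hf q hq)
  have hgprod : g.prod = p := by
    have h1 : Associated f.prod g.prod := by
      rw [hg, Multiset.prod_map_mul]
      exact ⟨(hunit.map Polynomial.C).unit, by
        rw [IsUnit.unit_spec, mul_comm,
          map_multiset_prod (Polynomial.C : ℤ →+* Polynomial ℤ), Multiset.map_map,
          Multiset.map_id']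
        rfl⟩
    have h2 : Associated g.prod p := h1.symm.trans hfp
    have hg0 : g.prod.coeff 0 = 1 := by
      rw [prod_coeff_zero]
      apply Multiset.prod_eq_one
      intro x hx
      rw [Multiset.mem_map] at hx
      obtain ⟨r, hr, rfl⟩ := hx
      exact (hgmem r hr).1
    exact assoc_eq_of_constantCoeff_one hg0 hp h2
  refine ⟨g, ⟨hgmem, hgprod⟩, ?_⟩
  rintro m ⟨hm1, hm2⟩
  have hrel : Multiset.Rel Associated m g :=
    prime_factors_unique
      (fun q hq => (hm1 q hq).2) (fun q hq => (hgmem q hq).2)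
      (by rw [hm2, hgprod]; exact Associated.refl p)
  rw [← Multiset.rel_eq]
  refine hrel.mono ?_
  intro a ha b hb hab
  exact assoc_eq_of_constantCoeff_one (hm1 a ha).1 (hgmem b hb).1 hab
end

section
/- Let A be a commutative ring with a λ-structure (λⁿ)_{n≥0} and let (σⁿ)_{n≥0} be its opposite structure. An element a ∈ A is virtually finite with respect to (λⁿ) if and only if it is virtually finite with respect to (σⁿ). Concretely: if a = y − z where λ_t(y) and λ_t(z) are polynomials in t, then there exist u, v ∈ A with σ_t(u) and σ_t(v) polynomials in t and a = u − v, and conversely. -/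
/-- Let `(λⁿ)` be a λ-structure on a commutative ring `A` and `(σⁿ)` its opposite structure
(`Σ σⁿ(x) tⁿ = (Σ λⁿ(x)(−t)ⁿ)⁻¹`).  An element `a ∈ A` is virtually finite with respect to
`(λⁿ)` (a difference of elements with polynomial `λ_t`) if and only if it is virtually finite
with respect to `(σⁿ)`. -/
theorem virtuallyFinite_iff_opposite {A : Type*} [CommRing A]
    (l : ℕ → A → A)
    (hl0 : ∀ x, l 0 x = 1)
    (hl1 : ∀ x, l 1 x = x)
    (hladd : ∀ n x y, l n (x + y) = ∑ p ∈ Finset.HasAntidiagonal.antidiagonal n, l p.1 x * l p.2 y)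
    (s : ℕ → A → A)
    (hs : ∀ x, (PowerSeries.mk fun n => s n x) *
      (PowerSeries.mk fun n => (-1 : A) ^ n * l n x) = 1)
    (a : A) :
    (∃ y z : A, a = y - z ∧ (∃ N, ∀ n > N, l n y = 0) ∧ (∃ N, ∀ n > N, l n z = 0)) ↔
    (∃ u v : A, a = u - v ∧ (∃ N, ∀ n > N, s n u = 0) ∧ (∃ N, ∀ n > N, s n v = 0)) := by
  -- Step 1: l n 0 = 0 for n ≥ 1
  have h0 : ∀ n, 0 < n → l n (0 : A) = 0 := by
    intro n
    induction n using Nat.strong_induction_on with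
    | _ n ih =>
      intro hn
      rcases Nat.lt_or_ge n 2 with h2 | h2
      · interval_cases n
        · simpa using hl1 (0 : A)
      · have h := hladd n 0 0
        rw [add_zero] at h
        have hsum : ∑ p ∈ Finset.HasAntidiagonal.antidiagonal n, l p.1 (0 : A) * l p.2 (0 : A)
            = l 0 (0 : A) * l n (0 : A) + l n (0 : A) * l 0 (0 : A) := by
          apply Finset.sum_eq_add ((0 : ℕ), n) (n, (0 : ℕ))
          · intro hne
            have : (0 : ℕ) = n := congrArg Prod.fst hne
            omega
          · rintro p hp ⟨hne1, hne2⟩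
            rw [Finset.HasAntidiagonal.mem_antidiagonal] at hp
            have hp1 : 0 < p.1 := by
              rcases Nat.eq_zero_or_pos p.1 with h' | h'
              · exfalso; apply hne1
                have : p.2 = n := by omega
                exact Prod.ext h' this
              · exact h'
            have hp1n : p.1 < n := by
              rcases Nat.lt_or_ge p.1 n with h' | h'
              · exact h'
              · exfalso; apply hne2
                have e1 : p.1 = n := by omega
                have e2 : p.2 = 0 := by omega
                exact Prod.ext e1 e2
            rw [ih p.1 hp1n hp1, zero_mul]
          · intro h'
            exact absurd (Finset.HasAntidiagonal.mem_antidiagonal.mpr (by simp)) h'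
          · intro h'
            exact absurd (Finset.HasAntidiagonal.mem_antidiagonal.mpr (by simp)) h'
        rw [hsum, hl0, one_mul, mul_one] at h
        have : l n (0 : A) + l n (0 : A) = l n (0 : A) + 0 := by
          rw [add_zero]; exact h.symm
        exact (add_left_cancel this)
  -- Step 2: the series L(-x) is inverse to L(x)
  have hmul : ∀ x : A,
      (PowerSeries.mk fun n => (-1 : A) ^ n * l n (-x)) *
      (PowerSeries.mk fun n => (-1 : A) ^ n * l n x) = 1 := by
    intro x
    ext n
    rw [PowerSeries.coeff_mul]
    have hterm : ∀ p ∈ Finset.HasAntidiagonal.antidiagonal n,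
        (PowerSeries.coeff p.1 (PowerSeries.mk fun n => (-1 : A) ^ n * l n (-x))) *
        (PowerSeries.coeff p.2 (PowerSeries.mk fun n => (-1 : A) ^ n * l n x)) =
        (-1 : A) ^ n * (l p.1 (-x) * l p.2 x) := by
      intro p hp
      rw [Finset.HasAntidiagonal.mem_antidiagonal] at hp
      simp only [PowerSeries.coeff_mk]
      rw [← hp, pow_add]
      ring
    rw [Finset.sum_congr rfl hterm, ← Finset.mul_sum, ← hladd n (-x) x, neg_add_cancel]
    cases n with
    | zero => simp [hl0]
    | succ m =>
        rw [h0 (m + 1) (Nat.succ_pos m), mul_zero]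
        simp
  -- Step 3: s n x = (-1)^n * l n (-x)
  have hkey : ∀ (x : A) (n : ℕ), s n x = (-1 : A) ^ n * l n (-x) := by
    intro x n
    have h1 : (PowerSeries.mk fun n => s n x) =
        (PowerSeries.mk fun n => (-1 : A) ^ n * l n (-x)) := by
      calc (PowerSeries.mk fun n => s n x)
          = (PowerSeries.mk fun n => s n x) *
            ((PowerSeries.mk fun n => (-1 : A) ^ n * l n x) *
             (PowerSeries.mk fun n => (-1 : A) ^ n * l n (-x))) := by
            have := hmul (-x)
            rw [neg_neg] at this
            rw [this, mul_one]
        _ = ((PowerSeries.mk fun n => s n x) *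
             (PowerSeries.mk fun n => (-1 : A) ^ n * l n x)) *
            (PowerSeries.mk fun n => (-1 : A) ^ n * l n (-x)) := by ring
        _ = (PowerSeries.mk fun n => (-1 : A) ^ n * l n (-x)) := by
            rw [hs x, one_mul]
    have := congrArg (PowerSeries.coeff n) h1
    simpa using this
  -- Step 4: the equivalence
  constructor
  · rintro ⟨y, z, hyz, ⟨N, hN⟩, ⟨M, hM⟩⟩
    refine ⟨-z, -y, by rw [hyz]; ring, ⟨M, fun n hn => ?_⟩, ⟨N, fun n hn => ?_⟩⟩
    · rw [hkey, neg_neg, hM n hn, mul_zero]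
    · rw [hkey, neg_neg, hN n hn, mul_zero]
  · rintro ⟨u, v, huv, ⟨N, hN⟩, ⟨M, hM⟩⟩
    refine ⟨-v, -u, by rw [huv]; ring, ⟨M, fun n hn => ?_⟩, ⟨N, fun n hn => ?_⟩⟩
    · have := hM n hn
      rw [hkey] at this
      have h2 : ((-1 : A) ^ n) * ((-1 : A) ^ n * l n (-v)) = 0 := by rw [this, mul_zero]
      rwa [← mul_assoc, ← pow_add, Even.neg_one_pow ⟨n, rfl⟩, one_mul] at h2
    · have := hN n hn
      rw [hkey] at this
      have h2 : ((-1 : A) ^ n) * ((-1 : A) ^ n * l n (-u)) = 0 := by rw [this, mul_zero]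
      rwa [← mul_assoc, ← pow_add, Even.neg_one_pow ⟨n, rfl⟩, one_mul] at h2
end
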